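/- Consider the closed-loop fully-observed system x_{t+1} = (A + BK_t)x_t + B l_t + w_{t+1}, 0 ≤ t ≤ N−1, with deterministic x₀ ∈ ℝⁿ, deterministic matrices K_t ∈ ℝ^{p×n} and vectors l_t ∈ ℝᵖ, and (w_t)_{t=1}^{N} i.i.d. ℝⁿ-valued with 𝔼‖w_t‖⁴ < ∞, mean w̄, covariance W, and w_{t+1} independent of σ(w_1,…,w_t). Let x̂_t := 𝔼[x_t | σ(w_1,…,w_{t−1})] = (A + BK_{t−1})x_{t−1} + Bl_{t−1} + w̄ and m₃ := 2Q·𝔼[(w−w̄)·((w−w̄)'Q(w−w̄))]. Define the backward recursions with terminal values P_N = 4QWQ, ζ_N = m₃, d_N = 0: P_{t−1} = (A + BK_{t−1})'P_t(A + BK_{t−1}) + 4QWQ; ζ_{t−1} = (A + BK_{t−1})'ζ_t + m₃ + (A + BK_{t−1})'P_t(Bl_{t−1} + w̄); d_{t−1} = d_t + tr([P_{t−1} − 4QWQ]W) + 2ζ_t'(w̄ + Bl_{t−1}) + (Bl_{t−1} + w̄)'P_t(Bl_{t−1} + w̄). Then the risk functional J_R := 𝔼 Σ_{t=1}^{N}[4·x̂_t'QWQ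 x̂_t + 2·x̂_t'm₃] satisfies J_R = x₀'(P₀ − 4QWQ)x₀ + 2(ζ₀ − m₃)'x₀ + d₀ − tr([P₀ − 4QWQ]W). -/

import Mathlib

open Matrix MeasureTheory ProbabilityTheory

section helpers
variable {Ω : Type*} [MeasurableSpace Ω] {P : Measure Ω} {n : ℕ}

lemma abs_mul_le_aux (a b s : ℝ) (ha : a^2 ≤ s) (hb : b^2 ≤ s) :
    |a * b| ≤ (1 + s^2)/2 := by
  have h1 : |a * b| = |a| * |b| := abs_mul a b
  nlinarith [sq_nonneg (|a| - |b|), sq_abs a, sq_abs b, abs_nonneg a, abs_nonneg b,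
    sq_nonneg (s - 1)]

lemma abs_le_aux (a : ℝ) : |a| ≤ (1 + a * a)/2 := by
  nlinarith [sq_nonneg (|a| - 1), sq_abs a, abs_nonneg a]

lemma helper_lin (f : Ω → Fin n → ℝ) (v : Fin n → ℝ)
    (h1 : ∀ i, Integrable (fun ω => f ω i) P) :
    ∫ ω, f ω ⬝ᵥ v ∂P = ∑ i, (∫ ω, f ω i ∂P) * v i := by
  have : ∀ ω, f ω ⬝ᵥ v = ∑ i, f ω i * v i := fun ω => rfl
  simp_rw [this]
  rw [integral_finset_sum _ (fun i _ => (h1 i).mul_const (v i))]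
  simp [integral_mul_const]

lemma helper_quad_pt (f : Ω → Fin n → ℝ) (R : Matrix (Fin n) (Fin n) ℝ) (ω : Ω) :
    f ω ⬝ᵥ (R *ᵥ f ω) = ∑ i, ∑ j, R i j * (f ω i * f ω j) := by
  simp only [dotProduct, mulVec, Finset.mul_sum]
  exact Finset.sum_congr rfl fun i _ => Finset.sum_congr rfl fun j _ => by ring

lemma helper_quad_int (f : Ω → Fin n → ℝ) (R : Matrix (Fin n) (Fin n) ℝ)
    (h2 : ∀ i j, Integrable (fun ω => f ω i * f ω j) P) :
    Integrable (fun ω => f ω ⬝ᵥ (R *ᵥ f ω)) P := by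
  simp_rw [helper_quad_pt]
  exact integrable_finset_sum _ fun i _ => integrable_finset_sum _
    (fun j _ => (h2 i j).const_mul (R i j))

lemma helper_quad (f : Ω → Fin n → ℝ) (R : Matrix (Fin n) (Fin n) ℝ)
    (h2 : ∀ i j, Integrable (fun ω => f ω i * f ω j) P) :
    ∫ ω, f ω ⬝ᵥ (R *ᵥ f ω) ∂P = ∑ i, ∑ j, R i j * ∫ ω, f ω i * f ω j ∂P := by
  simp_rw [helper_quad_pt]
  rw [integral_finset_sum _ (fun i _ => integrable_finset_sum _
    (fun j _ => (h2 i j).const_mul (R i j)))]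
  refine Finset.sum_congr rfl fun i _ => ?_
  rw [integral_finset_sum _ (fun j _ => (h2 i j).const_mul (R i j))]
  exact Finset.sum_congr rfl fun j _ => integral_const_mul _ _

lemma sum_pair (R T : Matrix (Fin n) (Fin n) ℝ) :
    ∑ i, ∑ j, R i j * T i j = Matrix.trace (R * Tᵀ) := by
  simp only [Matrix.trace, Matrix.diag, Matrix.mul_apply, Matrix.transpose_apply]

lemma sum_MSM (R M S : Matrix (Fin n) (Fin n) ℝ) :
    ∑ i, ∑ j, R i j * (M * S * Mᵀ) i j = ∑ k, ∑ l, (Mᵀ * R * M) k l * S k l := by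
  rw [sum_pair, sum_pair]
  rw [show R * (M * S * Mᵀ)ᵀ = (R * M) * (Sᵀ * Mᵀ) by
    simp [Matrix.transpose_mul, Matrix.mul_assoc]]
  rw [Matrix.trace_mul_cycle]
  simp only [Matrix.mul_assoc]
  rw [Matrix.trace_mul_comm]
  simp only [Matrix.mul_assoc]

lemma sum_RW (R W : Matrix (Fin n) (Fin n) ℝ) (hW : W.IsSymm) :
    ∑ i, ∑ j, R i j * W i j = Matrix.trace (R * W) := by
  rw [sum_pair, hW.eq]

lemma sum_Rab (R : Matrix (Fin n) (Fin n) ℝ) (a b : Fin n → ℝ) :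
    ∑ i, ∑ j, R i j * (a i * b j) = a ⬝ᵥ (R *ᵥ b) := by
  simp only [dotProduct, mulVec, Finset.mul_sum]
  exact Finset.sum_congr rfl fun i _ => Finset.sum_congr rfl fun j _ => by ring

lemma dot_tA (M : Matrix (Fin n) (Fin n) ℝ) (v u : Fin n → ℝ) :
    (Mᵀ *ᵥ v) ⬝ᵥ u = v ⬝ᵥ (M *ᵥ u) := by
  rw [Matrix.mulVec_transpose, ← Matrix.dotProduct_mulVec]

lemma dot_symm {Pt : Matrix (Fin n) (Fin n) ℝ} (hPt : Pt.IsSymm) (u v : Fin n → ℝ) :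
    u ⬝ᵥ (Pt *ᵥ v) = v ⬝ᵥ (Pt *ᵥ u) := by
  rw [dotProduct_comm]
  conv_lhs => rw [← hPt.eq]
  rw [dot_tA]

lemma MSMt_apply (M S : Matrix (Fin n) (Fin n) ℝ) (i j : Fin n) :
    (M * S * Mᵀ) i j = ∑ k, ∑ l, (M i k * M j l) * S k l := by
  simp only [Matrix.mul_apply, Matrix.transpose_apply, Finset.sum_mul]
  rw [Finset.sum_comm]
  exact Finset.sum_congr rfl fun k _ => Finset.sum_congr rfl fun l _ => by ring

lemma sum_sub_smul (T U : Matrix (Fin n) (Fin n) ℝ) (Y : Fin n → Fin n → ℝ) :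
    ∑ i, ∑ j, (T - (4:ℝ) • U) i j * Y i j
      = (∑ i, ∑ j, T i j * Y i j) - 4 * ∑ i, ∑ j, U i j * Y i j := by
  rw [Finset.mul_sum, ← Finset.sum_sub_distrib]
  refine Finset.sum_congr rfl fun i _ => ?_
  rw [Finset.mul_sum, ← Finset.sum_sub_distrib]
  refine Finset.sum_congr rfl fun j _ => ?_
  simp only [Matrix.sub_apply, Matrix.smul_apply, smul_eq_mul]
  ring

lemma sum_expand' (R M S : Matrix (Fin n) (Fin n) ℝ) (u c : Fin n → ℝ) :
    ∑ i, ∑ j, R i j * ((M * S * Mᵀ) i j + (u i * c j + c i * u j + c i * c j))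
      = (∑ k, ∑ l, (Mᵀ * R * M) k l * S k l)
        + (u ⬝ᵥ (R *ᵥ c) + c ⬝ᵥ (R *ᵥ u) + c ⬝ᵥ (R *ᵥ c)) := by
  simp only [mul_add, Finset.sum_add_distrib]
  rw [sum_MSM, sum_Rab, sum_Rab, sum_Rab]

lemma sum_expand (R M S W : Matrix (Fin n) (Fin n) ℝ) (u c : Fin n → ℝ) (hW : W.IsSymm) :
    ∑ i, ∑ j, R i j * (((M * S * Mᵀ) i j + (u i * c j + c i * u j + c i * c j)) + W i j)
      = ((∑ k, ∑ l, (Mᵀ * R * M) k l * S k l)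
        + (u ⬝ᵥ (R *ᵥ c) + c ⬝ᵥ (R *ᵥ u) + c ⬝ᵥ (R *ᵥ c))) + Matrix.trace (R * W) := by
  simp only [mul_add, Finset.sum_add_distrib]
  rw [sum_MSM, sum_Rab, sum_Rab, sum_Rab, sum_RW _ _ hW]

end helpers

/-- **Proposition 3 (Risk Functional Evaluation, fully-observed case).** Along an affine
state-feedback policy `u_t = K_t x_t + l_t`, the total expected predictive-variance risk
functional `J_R = 𝔼 Σ_{t=1}^N [4 x̂_t'QWQ x̂_t + 2 x̂_t'm₃]` admits the closed-form
backward-recursive expression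
`J_R = x₀'(P₀ − 4QWQ)x₀ + 2(ζ₀ − m₃)'x₀ + d₀ − tr((P₀ − 4QWQ)W)`. -/
theorem stmt_17 {n p : ℕ} {Ω : Type*} {m𝔉 : MeasurableSpace Ω}
    (P : Measure Ω) [IsProbabilityMeasure P]
    (A : Matrix (Fin n) (Fin n) ℝ) (B : Matrix (Fin n) (Fin p) ℝ)
    (Q : Matrix (Fin n) (Fin n) ℝ) (hQ : Q.IsSymm)
    (N : ℕ) (hN : 0 < N) (x₀ : Fin n → ℝ)
    -- the deterministic feedback gains and affine terms
    (K : ℕ → Matrix (Fin p) (Fin n) ℝ) (l : ℕ → Fin p → ℝ)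
    -- the i.i.d. process noise, with finite fourth moments
    (w : ℕ → Ω → Fin n → ℝ)
    (hwmeas : ∀ t, 1 ≤ t → t ≤ N → Measurable (w t))
    (hwid : ∀ t, 1 ≤ t → t ≤ N → Measure.map (w t) P = Measure.map (w 1) P)
    (hw4 : ∀ t, 1 ≤ t → t ≤ N → Integrable (fun ω => (∑ i, (w t ω i) ^ 2) ^ 2) P)
    (hindep : ∀ t, t < N →
      Indep (MeasurableSpace.comap (w (t + 1)) inferInstance)
        (⨆ s ∈ Set.Icc 1 t, MeasurableSpace.comap (w s) inferInstance) P)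
    -- noise statistics: mean, covariance and third-moment vector
    (wbar : Fin n → ℝ) (hwbar : wbar = fun i => ∫ ω, w 1 ω i ∂P)
    (W : Matrix (Fin n) (Fin n) ℝ)
    (hW : W = Matrix.of fun i j => ∫ ω, (w 1 ω i - wbar i) * (w 1 ω j - wbar j) ∂P)
    (m₃ : Fin n → ℝ)
    (hm₃ : m₃ = (2 : ℝ) • (Q *ᵥ fun i =>
      ∫ ω, (w 1 ω i - wbar i) * ((w 1 ω - wbar) ⬝ᵥ (Q *ᵥ (w 1 ω - wbar))) ∂P))
    -- the closed-loop state process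
    (x : ℕ → Ω → Fin n → ℝ)
    (hx0 : x 0 = fun _ => x₀)
    (hxdyn : ∀ t, t < N →
      x (t + 1) = fun ω => (A + B * K t) *ᵥ x t ω + B *ᵥ l t + w (t + 1) ω)
    -- the one-step predictor `x̂_t = 𝔼[x_t|σ(w_1,…,w_{t−1})] = (A+BK_{t−1})x_{t−1}+Bl_{t−1}+w̄`
    (xhat : ℕ → Ω → Fin n → ℝ)
    (hxhat : ∀ t, 1 ≤ t → t ≤ N →
      xhat t = fun ω => (A + B * K (t - 1)) *ᵥ x (t - 1) ω + B *ᵥ l (t - 1) + wbar)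
    -- the backward recursions of Proposition 3
    (Pm : ℕ → Matrix (Fin n) (Fin n) ℝ) (ζ : ℕ → Fin n → ℝ) (d : ℕ → ℝ)
    (hPN : Pm N = (4 : ℝ) • (Q * W * Q))
    (hP : ∀ t, 1 ≤ t → t ≤ N →
      Pm (t - 1) = (A + B * K (t - 1))ᵀ * Pm t * (A + B * K (t - 1)) + (4 : ℝ) • (Q * W * Q))
    (hζN : ζ N = m₃)
    (hζ : ∀ t, 1 ≤ t → t ≤ N →
      ζ (t - 1) = (A + B * K (t - 1))ᵀ *ᵥ ζ t + m₃
        + (A + B * K (t - 1))ᵀ *ᵥ (Pm t *ᵥ (B *ᵥ l (t - 1) + wbar)))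
    (hdN : d N = 0)
    (hd : ∀ t, 1 ≤ t → t ≤ N →
      d (t - 1) = d t + Matrix.trace ((Pm (t - 1) - (4 : ℝ) • (Q * W * Q)) * W)
        + 2 * (ζ t ⬝ᵥ (wbar + B *ᵥ l (t - 1)))
        + (B *ᵥ l (t - 1) + wbar) ⬝ᵥ (Pm t *ᵥ (B *ᵥ l (t - 1) + wbar))) :
    -- the risk functional evaluation
    (∫ ω, ∑ t ∈ Finset.Icc 1 N,
        (4 * (xhat t ω ⬝ᵥ ((Q * W * Q) *ᵥ xhat t ω)) + 2 * (xhat t ω ⬝ᵥ m₃)) ∂P)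
      = x₀ ⬝ᵥ ((Pm 0 - (4 : ℝ) • (Q * W * Q)) *ᵥ x₀)
        + 2 * ((ζ 0 - m₃) ⬝ᵥ x₀)
        + d 0 - Matrix.trace ((Pm 0 - (4 : ℝ) • (Q * W * Q)) * W) := by
  -- componentwise means and second moments of the state process
  set μf : ℕ → Fin n → ℝ := fun t i => ∫ ω, x t ω i ∂P with hμf
  set Sf : ℕ → Matrix (Fin n) (Fin n) ℝ :=
    fun t => Matrix.of fun i j => ∫ ω, x t ω i * x t ω j ∂P with hSf
  set F : ℕ → ℝ := fun s =>
    (∑ i, ∑ j, (Pm s - (4 : ℝ) • (Q * W * Q)) i j * Sf s i j)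
      + 2 * ((ζ s - m₃) ⬝ᵥ μf s) + d s
      - Matrix.trace ((Pm s - (4 : ℝ) • (Q * W * Q)) * W) with hF
  -- noise moment facts
  have hwco : ∀ t, 1 ≤ t → t ≤ N → ∀ i : Fin n, Measurable (fun ω => w t ω i) := by
    intro t h1 h2 i; exact (measurable_pi_apply i).comp (hwmeas t h1 h2)
  have hwi2 : ∀ t, 1 ≤ t → t ≤ N → ∀ i j : Fin n,
      Integrable (fun ω => w t ω i * w t ω j) P := by
    intro t h1 h2 i j
    have hg : Integrable (fun ω => (1 + (∑ k, (w t ω k)^2)^2)/2) P :=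
      ((integrable_const (1:ℝ)).add (hw4 t h1 h2)).div_const 2
    refine hg.mono' (((hwco t h1 h2 i).mul (hwco t h1 h2 j)).aestronglyMeasurable)
      (ae_of_all _ fun ω => ?_)
    have hi' : (w t ω i)^2 ≤ ∑ k, (w t ω k)^2 :=
      Finset.single_le_sum (f := fun k => (w t ω k)^2) (fun k _ => sq_nonneg _)
        (Finset.mem_univ i)
    have hj' : (w t ω j)^2 ≤ ∑ k, (w t ω k)^2 :=
      Finset.single_le_sum (f := fun k => (w t ω k)^2) (fun k _ => sq_nonneg _)
        (Finset.mem_univ j)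
    simpa [Real.norm_eq_abs, abs_mul] using abs_mul_le_aux _ _ _ hi' hj'
  have hwi1 : ∀ t, 1 ≤ t → t ≤ N → ∀ i : Fin n, Integrable (fun ω => w t ω i) P := by
    intro t h1 h2 i
    have hg : Integrable (fun ω => (1 + w t ω i * w t ω i)/2) P :=
      ((integrable_const (1:ℝ)).add (hwi2 t h1 h2 i i)).div_const 2
    refine hg.mono' (hwco t h1 h2 i).aestronglyMeasurable (ae_of_all _ fun ω => ?_)
    simpa [Real.norm_eq_abs] using abs_le_aux (w t ω i)
  have hwmean : ∀ t, 1 ≤ t → t ≤ N → ∀ i : Fin n, ∫ ω, w t ω i ∂P = wbar i := by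
    intro t h1 h2 i
    have e1 : ∫ ω, w t ω i ∂P = ∫ y, y i ∂(Measure.map (w t) P) :=
      (integral_map (hwmeas t h1 h2).aemeasurable
        (measurable_pi_apply i).aestronglyMeasurable).symm
    have e2 : ∫ y, y i ∂(Measure.map (w 1) P) = ∫ ω, w 1 ω i ∂P :=
      integral_map (hwmeas 1 le_rfl hN).aemeasurable
        (measurable_pi_apply i).aestronglyMeasurable
    rw [e1, hwid t h1 h2, e2, hwbar]
  have hwcov : ∀ t, 1 ≤ t → t ≤ N → ∀ i j : Fin n,
      ∫ ω, (w t ω i - wbar i) * (w t ω j - wbar j) ∂P = W i j := by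
    intro t h1 h2 i j
    have hφ : Measurable (fun y : Fin n → ℝ => (y i - wbar i) * (y j - wbar j)) :=
      ((measurable_pi_apply i).sub measurable_const).mul
        ((measurable_pi_apply j).sub measurable_const)
    have e1 : ∫ ω, (w t ω i - wbar i) * (w t ω j - wbar j) ∂P
        = ∫ y, (y i - wbar i) * (y j - wbar j) ∂(Measure.map (w t) P) :=
      (integral_map (hwmeas t h1 h2).aemeasurable hφ.aestronglyMeasurable).symm
    have e2 : ∫ y, (y i - wbar i) * (y j - wbar j) ∂(Measure.map (w 1) P)
        = ∫ ω, (w 1 ω i - wbar i) * (w 1 ω j - wbar j) ∂P :=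
      integral_map (hwmeas 1 le_rfl hN).aemeasurable hφ.aestronglyMeasurable
    rw [e1, hwid t h1 h2, e2, hW]
    rfl
  have hwd2 : ∀ t, 1 ≤ t → t ≤ N → ∀ i j : Fin n,
      Integrable (fun ω => (w t ω i - wbar i) * (w t ω j - wbar j)) P := by
    intro t h1 h2 i j
    have e : (fun ω => (w t ω i - wbar i) * (w t ω j - wbar j))
        = fun ω => w t ω i * w t ω j - wbar i * w t ω j
          - (w t ω i * wbar j - wbar i * wbar j) := by
      funext ω; ring
    rw [e]
    exact ((hwi2 t h1 h2 i j).sub ((hwi1 t h1 h2 j).const_mul _)).sub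
      (((hwi1 t h1 h2 i).mul_const _).sub (integrable_const _))
  -- symmetry facts
  have hWsymm : W.IsSymm := by
    show Wᵀ = W
    ext i j
    rw [hW]
    show (∫ ω, (w 1 ω j - wbar j) * (w 1 ω i - wbar i) ∂P)
      = ∫ ω, (w 1 ω i - wbar i) * (w 1 ω j - wbar j) ∂P
    exact integral_congr_ae (Filter.Eventually.of_forall fun ω => mul_comm _ _)
  have hQWQsymm : (Q * W * Q).IsSymm := by
    show (Q * W * Q)ᵀ = Q * W * Q
    simp [Matrix.transpose_mul, hQ.eq, hWsymm.eq, Matrix.mul_assoc]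
  have hPmsymm : ∀ t, t ≤ N → (Pm t).IsSymm := by
    have key : ∀ k, k ≤ N → (Pm (N - k)).IsSymm := by
      intro k
      induction k with
      | zero =>
        intro _
        show (Pm (N - 0))ᵀ = Pm (N - 0)
        simp only [Nat.sub_zero, hPN]
        rw [Matrix.transpose_smul, hQWQsymm.eq]
      | succ k ih =>
        intro hk
        have hs := ih (by omega)
        have ht1 : 1 ≤ N - k := by omega
        have ht2 : N - k ≤ N := by omega
        have e := hP (N - k) ht1 ht2
        have hidx : N - (k+1) = (N - k) - 1 := by omega
        show (Pm (N - (k+1)))ᵀ = Pm (N - (k+1))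
        rw [hidx, e, Matrix.transpose_add, Matrix.transpose_smul, hQWQsymm.eq]
        congr 1
        rw [Matrix.transpose_mul, Matrix.transpose_mul, Matrix.transpose_transpose,
          Matrix.mul_assoc]
        rw [show (Pm (N - k))ᵀ = Pm (N - k) from hs.eq]
    intro t ht
    have : t = N - (N - t) := by omega
    rw [this]
    exact key (N - t) (by omega)
  -- the filtration
  have h𝔉mono : ∀ s t : ℕ, s ≤ t →
      (⨆ r ∈ Set.Icc 1 s, MeasurableSpace.comap (w r) inferInstance) ≤
      (⨆ r ∈ Set.Icc 1 t, MeasurableSpace.comap (w r) inferInstance) := by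
    intro s t hst
    exact iSup₂_le fun r hr => le_iSup₂ (f := fun r _ => MeasurableSpace.comap (w r) inferInstance)
      r (Set.Icc_subset_Icc_right hst hr)
  -- measurability and integrability of the state process
  have main : ∀ t, t ≤ N →
      (Measurable[⨆ r ∈ Set.Icc 1 t, MeasurableSpace.comap (w r) inferInstance] (x t)) ∧
      (∀ i, Integrable (fun ω => x t ω i) P) ∧
      (∀ i j, Integrable (fun ω => x t ω i * x t ω j) P) := by
    intro t
    induction t with
    | zero =>
      intro _
      refine ⟨?_, fun i => ?_, fun i j => ?_⟩
      · rw [hx0]; exact measurable_const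
      · simp only [hx0]; exact integrable_const _
      · simp only [hx0]; exact integrable_const _
    | succ t ih =>
      intro h
      have htN : t < N := h
      obtain ⟨hxm, hx1, hx2⟩ := ih (le_of_lt htN)
      have ht1 : 1 ≤ t + 1 := by omega
      have hcomp : ∀ ω i, x (t+1) ω i
          = (∑ k, (A + B * K t) i k * x t ω k) + ((B *ᵥ l t) i + w (t+1) ω i) := by
        intro ω i
        rw [hxdyn t htN]
        simp [Matrix.mulVec, dotProduct, add_assoc]
      have hIndep : IndepFun (x t) (w (t+1)) P := by
        have h1 := hindep t htN
        have h2 : MeasurableSpace.comap (x t) inferInstance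
            ≤ ⨆ r ∈ Set.Icc 1 t, MeasurableSpace.comap (w r) inferInstance := hxm.comap_le
        exact (indep_of_indep_of_le_right h1 h2).symm
      have hxw_int : ∀ k j', Integrable (fun ω => x t ω k * w (t+1) ω j') P := by
        intro k j'
        have hi : IndepFun (fun ω => x t ω k) (fun ω => w (t+1) ω j') P :=
          hIndep.comp (measurable_pi_apply k) (measurable_pi_apply j')
        exact hi.integrable_mul (hx1 k) (hwi1 (t+1) ht1 h j')
      have hX1 : ∀ i', Integrable (fun ω => ∑ k, (A + B * K t) i' k * x t ω k) P :=
        fun i' => integrable_finset_sum _ fun k _ => (hx1 k).const_mul _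
      have hXX : ∀ i j, Integrable (fun ω =>
          (∑ k, (A + B * K t) i k * x t ω k) * (∑ k2, (A + B * K t) j k2 * x t ω k2)) P := by
        intro i j
        have e : (fun ω => (∑ k, (A + B * K t) i k * x t ω k)
              * (∑ k2, (A + B * K t) j k2 * x t ω k2))
            = fun ω => ∑ k, ∑ k2, ((A + B * K t) i k * (A + B * K t) j k2)
              * (x t ω k * x t ω k2) := by
          funext ω
          rw [Finset.sum_mul_sum]
          exact Finset.sum_congr rfl fun k _ => Finset.sum_congr rfl fun k2 _ => by ring
        rw [e]
        exact integrable_finset_sum _ fun k _ => integrable_finset_sum _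
          fun k2 _ => (hx2 k k2).const_mul _
      have hXw : ∀ i' j', Integrable (fun ω =>
          (∑ k, (A + B * K t) i' k * x t ω k) * w (t+1) ω j') P := by
        intro i' j'
        have e : (fun ω => (∑ k, (A + B * K t) i' k * x t ω k) * w (t+1) ω j')
            = fun ω => ∑ k, (A + B * K t) i' k * (x t ω k * w (t+1) ω j') := by
          funext ω
          rw [Finset.sum_mul]
          exact Finset.sum_congr rfl fun k _ => by ring
        rw [e]
        exact integrable_finset_sum _ fun k _ => (hxw_int k j').const_mul _
      refine ⟨?_, fun i => ?_, fun i j => ?_⟩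
      · have hxt' : Measurable[⨆ r ∈ Set.Icc 1 (t+1), MeasurableSpace.comap (w r)
            inferInstance] (x t) := hxm.mono (h𝔉mono t (t+1) (by omega)) le_rfl
        have hwt' : Measurable[⨆ r ∈ Set.Icc 1 (t+1), MeasurableSpace.comap (w r)
            inferInstance] (w (t+1)) :=
          measurable_iff_comap_le.2 (le_iSup₂
            (f := fun r (_ : r ∈ Set.Icc 1 (t+1)) => MeasurableSpace.comap (w r) inferInstance)
            (t+1) ⟨ht1, le_rfl⟩)
        have hφ : Measurable (fun q : (Fin n → ℝ) × (Fin n → ℝ) =>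
            fun i => (∑ k, (A + B * K t) i k * q.1 k) + ((B *ᵥ l t) i + q.2 i)) :=
          measurable_pi_iff.2 fun i =>
            (Finset.measurable_sum _ fun k _ =>
              ((measurable_pi_apply k).comp measurable_fst).const_mul _).add
            (measurable_const.add ((measurable_pi_apply i).comp measurable_snd))
        have hg : Measurable[⨆ r ∈ Set.Icc 1 (t+1), MeasurableSpace.comap (w r)
            inferInstance] (fun ω => (x t ω, w (t+1) ω)) :=
          Measurable.prod (by exact hxt') (by exact hwt')
        have e : x (t+1) = (fun q : (Fin n → ℝ) × (Fin n → ℝ) =>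
            fun i => (∑ k, (A + B * K t) i k * q.1 k) + ((B *ᵥ l t) i + q.2 i))
            ∘ (fun ω => (x t ω, w (t+1) ω)) := by
          funext ω; funext i; exact hcomp ω i
        rw [e]
        exact hφ.comp hg
      · have e : (fun ω => x (t+1) ω i) = fun ω => (∑ k, (A + B * K t) i k * x t ω k)
            + ((B *ᵥ l t) i + w (t+1) ω i) := funext fun ω => hcomp ω i
        rw [e]
        exact (hX1 i).add ((integrable_const _).add (hwi1 (t+1) ht1 h i))
      · have e : (fun ω => x (t+1) ω i * x (t+1) ω j) = fun ω =>
            ((∑ k, (A + B * K t) i k * x t ω k) * (∑ k2, (A + B * K t) j k2 * x t ω k2)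
              + ((∑ k, (A + B * K t) i k * x t ω k) * (B *ᵥ l t) j
                + (∑ k, (A + B * K t) i k * x t ω k) * w (t+1) ω j))
            + (((B *ᵥ l t) i * (∑ k2, (A + B * K t) j k2 * x t ω k2)
                + ((B *ᵥ l t) i * (B *ᵥ l t) j + (B *ᵥ l t) i * w (t+1) ω j))
              + ((∑ k2, (A + B * K t) j k2 * x t ω k2) * w (t+1) ω i
                + ((B *ᵥ l t) j * w (t+1) ω i + w (t+1) ω i * w (t+1) ω j))) := by
          funext ω
          rw [hcomp ω i, hcomp ω j]
          ring
        rw [e]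
        exact ((hXX i j).add (((hX1 i).mul_const _).add (hXw i j))).add
          ((((hX1 j).const_mul _).add ((integrable_const _).add
            ((hwi1 (t+1) ht1 h j).const_mul _))).add
          ((hXw j i).add (((hwi1 (t+1) ht1 h i).const_mul _).add (hwi2 (t+1) ht1 h i j))))
  -- the key one-step facts
  have step : ∀ t, t < N →
      Integrable (fun ω => 4 * (xhat (t+1) ω ⬝ᵥ ((Q * W * Q) *ᵥ xhat (t+1) ω))
        + 2 * (xhat (t+1) ω ⬝ᵥ m₃)) P ∧
      (∫ ω, (4 * (xhat (t+1) ω ⬝ᵥ ((Q * W * Q) *ᵥ xhat (t+1) ω))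
        + 2 * (xhat (t+1) ω ⬝ᵥ m₃)) ∂P = F t - F (t+1)) := by
    intro t ht
    have ht1 : 1 ≤ t + 1 := by omega
    have htN : t + 1 ≤ N := ht
    obtain ⟨hxm, hx1, hx2⟩ := main t (le_of_lt ht)
    have hμapp : ∀ s i, μf s i = ∫ ω, x s ω i ∂P := fun s i => by rw [hμf]
    have hSapp : ∀ s (i j : Fin n), Sf s i j = ∫ ω, x s ω i * x s ω j ∂P :=
      fun s i j => by rw [hSf]; rfl
    have hxhat1 : xhat (t+1) = fun ω => (A + B * K t) *ᵥ x t ω + B *ᵥ l t + wbar := by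
      have := hxhat (t+1) ht1 htN
      simpa [Nat.add_sub_cancel] using this
    have hhc : ∀ ω i, xhat (t+1) ω i
        = (∑ k, (A + B * K t) i k * x t ω k) + (B *ᵥ l t + wbar) i := by
      intro ω i
      rw [hxhat1]
      simp [Matrix.mulVec, dotProduct, add_assoc]
    have hIndep : IndepFun (x t) (w (t+1)) P := by
      have h1 := hindep t ht
      exact (indep_of_indep_of_le_right h1 hxm.comap_le).symm
    have hX1 : ∀ i', Integrable (fun ω => ∑ k, (A + B * K t) i' k * x t ω k) P :=
      fun i' => integrable_finset_sum _ fun k _ => (hx1 k).const_mul _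
    have hXc : ∀ i', (∫ ω, ∑ k, (A + B * K t) i' k * x t ω k ∂P)
        = ((A + B * K t) *ᵥ μf t) i' := by
      intro i'
      rw [integral_finset_sum _ fun k _ => (hx1 k).const_mul _]
      rw [show ((A + B * K t) *ᵥ μf t) i' = ∑ k, (A + B * K t) i' k * μf t k from by
        simp [Matrix.mulVec, dotProduct]]
      refine Finset.sum_congr rfl fun k _ => ?_
      rw [integral_const_mul, hμapp t k]
    have hXX_int : ∀ i j, Integrable (fun ω =>
        (∑ k, (A + B * K t) i k * x t ω k) * (∑ k2, (A + B * K t) j k2 * x t ω k2)) P := by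
      intro i j
      have e : (fun ω => (∑ k, (A + B * K t) i k * x t ω k)
            * (∑ k2, (A + B * K t) j k2 * x t ω k2))
          = fun ω => ∑ k, ∑ k2, ((A + B * K t) i k * (A + B * K t) j k2)
            * (x t ω k * x t ω k2) := by
        funext ω
        rw [Finset.sum_mul_sum]
        exact Finset.sum_congr rfl fun k _ => Finset.sum_congr rfl fun k2 _ => by ring
      rw [e]
      exact integrable_finset_sum _ fun k _ => integrable_finset_sum _
        fun k2 _ => (hx2 k k2).const_mul _
    have hXXc : ∀ i j, (∫ ω, (∑ k, (A + B * K t) i k * x t ω k)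
          * (∑ k2, (A + B * K t) j k2 * x t ω k2) ∂P)
        = ((A + B * K t) * Sf t * (A + B * K t)ᵀ) i j := by
      intro i j
      have e : (fun ω => (∑ k, (A + B * K t) i k * x t ω k)
            * (∑ k2, (A + B * K t) j k2 * x t ω k2))
          = fun ω => ∑ k, ∑ k2, ((A + B * K t) i k * (A + B * K t) j k2)
            * (x t ω k * x t ω k2) := by
        funext ω
        rw [Finset.sum_mul_sum]
        exact Finset.sum_congr rfl fun k _ => Finset.sum_congr rfl fun k2 _ => by ring
      rw [e, integral_finset_sum _ fun k _ => integrable_finset_sum _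
        fun k2 _ => (hx2 k k2).const_mul _]
      rw [MSMt_apply]
      refine Finset.sum_congr rfl fun k _ => ?_
      rw [integral_finset_sum _ fun k2 _ => (hx2 k k2).const_mul _]
      refine Finset.sum_congr rfl fun k2 _ => ?_
      rw [integral_const_mul, hSapp t k k2]
    have hhat1 : ∀ i, Integrable (fun ω => xhat (t+1) ω i) P := by
      intro i
      have e : (fun ω => xhat (t+1) ω i) = fun ω => (∑ k, (A + B * K t) i k * x t ω k)
          + (B *ᵥ l t + wbar) i := funext fun ω => hhc ω i
      rw [e]
      exact (hX1 i).add (integrable_const _)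
    have hhatmean : ∀ i, (∫ ω, xhat (t+1) ω i ∂P)
        = ((A + B * K t) *ᵥ μf t) i + (B *ᵥ l t + wbar) i := by
      intro i
      have e : (fun ω => xhat (t+1) ω i) = fun ω => (∑ k, (A + B * K t) i k * x t ω k)
          + (B *ᵥ l t + wbar) i := funext fun ω => hhc ω i
      rw [e, integral_add (hX1 i) (integrable_const _), hXc i, integral_const]
      simp
    have hhat2 : ∀ i j, Integrable (fun ω => xhat (t+1) ω i * xhat (t+1) ω j) P := by
      intro i j
      have e : (fun ω => xhat (t+1) ω i * xhat (t+1) ω j) = fun ω =>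
          (∑ k, (A + B * K t) i k * x t ω k) * (∑ k2, (A + B * K t) j k2 * x t ω k2)
          + ((∑ k, (A + B * K t) i k * x t ω k) * (B *ᵥ l t + wbar) j
            + ((B *ᵥ l t + wbar) i * (∑ k2, (A + B * K t) j k2 * x t ω k2)
              + (B *ᵥ l t + wbar) i * (B *ᵥ l t + wbar) j)) := by
        funext ω
        rw [hhc ω i, hhc ω j]
        ring
      rw [e]
      exact (hXX_int i j).add (((hX1 i).mul_const _).add
        (((hX1 j).const_mul _).add (integrable_const _)))
    have hhatS : ∀ i j, (∫ ω, xhat (t+1) ω i * xhat (t+1) ω j ∂P)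
        = ((A + B * K t) * Sf t * (A + B * K t)ᵀ) i j
          + (((A + B * K t) *ᵥ μf t) i * (B *ᵥ l t + wbar) j
            + (B *ᵥ l t + wbar) i * (((A + B * K t) *ᵥ μf t) j)
            + (B *ᵥ l t + wbar) i * (B *ᵥ l t + wbar) j) := by
      intro i j
      have e : (fun ω => xhat (t+1) ω i * xhat (t+1) ω j) = fun ω =>
          (∑ k, (A + B * K t) i k * x t ω k) * (∑ k2, (A + B * K t) j k2 * x t ω k2)
          + ((∑ k, (A + B * K t) i k * x t ω k) * (B *ᵥ l t + wbar) j
            + ((B *ᵥ l t + wbar) i * (∑ k2, (A + B * K t) j k2 * x t ω k2)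
              + (B *ᵥ l t + wbar) i * (B *ᵥ l t + wbar) j)) := by
        funext ω
        rw [hhc ω i, hhc ω j]
        ring
      have hIa : Integrable (fun ω => (∑ k, (A + B * K t) i k * x t ω k)
          * (B *ᵥ l t + wbar) j) P := (hX1 i).mul_const _
      have hIb : Integrable (fun ω => (B *ᵥ l t + wbar) i
          * (∑ k2, (A + B * K t) j k2 * x t ω k2)) P := (hX1 j).const_mul _
      have hIc : Integrable (fun _ : Ω => (B *ᵥ l t + wbar) i * (B *ᵥ l t + wbar) j) P :=
        integrable_const _
      have hIbc : Integrable (fun ω => (B *ᵥ l t + wbar) i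
          * (∑ k2, (A + B * K t) j k2 * x t ω k2)
          + (B *ᵥ l t + wbar) i * (B *ᵥ l t + wbar) j) P := hIb.add hIc
      have hIabc : Integrable (fun ω => (∑ k, (A + B * K t) i k * x t ω k)
          * (B *ᵥ l t + wbar) j
          + ((B *ᵥ l t + wbar) i * (∑ k2, (A + B * K t) j k2 * x t ω k2)
            + (B *ᵥ l t + wbar) i * (B *ᵥ l t + wbar) j)) P := hIa.add hIbc
      rw [e, integral_add (hXX_int i j) hIabc, integral_add hIa hIbc,
        integral_add hIb hIc,
        integral_mul_const, integral_const_mul, integral_const, hXXc i j, hXc i, hXc j]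
      simp
      ring
    have hδ1 : ∀ j', Integrable (fun ω => w (t+1) ω j' - wbar j') P :=
      fun j' => (hwi1 (t+1) ht1 htN j').sub (integrable_const _)
    have hδ0 : ∀ j', (∫ ω, (w (t+1) ω j' - wbar j') ∂P) = 0 := by
      intro j'
      rw [integral_sub (hwi1 (t+1) ht1 htN j') (integrable_const _),
        hwmean (t+1) ht1 htN j', integral_const]
      simp
    have hIhd : ∀ i j', IndepFun (fun ω => xhat (t+1) ω i)
        (fun ω => w (t+1) ω j' - wbar j') P := by
      intro i j'
      have hφ : Measurable (fun v : Fin n → ℝ =>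
          (∑ k, (A + B * K t) i k * v k) + (B *ᵥ l t + wbar) i) :=
        (Finset.measurable_sum _ fun k _ => (measurable_pi_apply k).const_mul _).add_const _
      have hψ : Measurable (fun v : Fin n → ℝ => v j' - wbar j') :=
        (measurable_pi_apply j').sub measurable_const
      have h := hIndep.comp hφ hψ
      have e : (fun ω => xhat (t+1) ω i) = (fun v : Fin n → ℝ =>
          (∑ k, (A + B * K t) i k * v k) + (B *ᵥ l t + wbar) i) ∘ (x t) :=
        funext fun ω => hhc ω i
      rw [e]
      exact h
    have hhatδ_int : ∀ i j', Integrable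
        (fun ω => xhat (t+1) ω i * (w (t+1) ω j' - wbar j')) P :=
      fun i j' => (hIhd i j').integrable_mul (hhat1 i) (hδ1 j')
    have hhatδ0 : ∀ i j', (∫ ω, xhat (t+1) ω i * (w (t+1) ω j' - wbar j') ∂P) = 0 := by
      intro i j'
      have h2 : (∫ ω, xhat (t+1) ω i * (w (t+1) ω j' - wbar j') ∂P)
          = (∫ ω, xhat (t+1) ω i ∂P) * ∫ ω, (w (t+1) ω j' - wbar j') ∂P :=
        (hIhd i j').integral_fun_mul_eq_mul_integral (hhat1 i).aestronglyMeasurable (hδ1 j').aestronglyMeasurable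
      rw [h2, hδ0 j', mul_zero]
    have hdecomp : ∀ ω i, x (t+1) ω i = xhat (t+1) ω i + (w (t+1) ω i - wbar i) := by
      intro ω i
      rw [hxdyn t ht, hxhat1]
      simp only [Pi.add_apply]
      ring
    have hμrec : μf (t+1) = (A + B * K t) *ᵥ μf t + (B *ᵥ l t + wbar) := by
      funext i
      rw [hμapp (t+1) i]
      have e : (fun ω => x (t+1) ω i) = fun ω => xhat (t+1) ω i + (w (t+1) ω i - wbar i) :=
        funext fun ω => hdecomp ω i
      rw [e, integral_add (hhat1 i) (hδ1 i), hhatmean i, hδ0 i, add_zero]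
      simp [Pi.add_apply]
    have hSrec : ∀ i j, Sf (t+1) i j
        = (((A + B * K t) * Sf t * (A + B * K t)ᵀ) i j
          + (((A + B * K t) *ᵥ μf t) i * (B *ᵥ l t + wbar) j
            + (B *ᵥ l t + wbar) i * (((A + B * K t) *ᵥ μf t) j)
            + (B *ᵥ l t + wbar) i * (B *ᵥ l t + wbar) j)) + W i j := by
      intro i j
      rw [hSapp (t+1) i j]
      have e : (fun ω => x (t+1) ω i * x (t+1) ω j) = fun ω =>
          xhat (t+1) ω i * xhat (t+1) ω j
          + (xhat (t+1) ω i * (w (t+1) ω j - wbar j)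
            + (xhat (t+1) ω j * (w (t+1) ω i - wbar i)
              + (w (t+1) ω i - wbar i) * (w (t+1) ω j - wbar j))) := by
        funext ω
        rw [hdecomp ω i, hdecomp ω j]
        ring
      have hJc : Integrable (fun ω => (w (t+1) ω i - wbar i) * (w (t+1) ω j - wbar j)) P :=
        hwd2 (t+1) ht1 htN i j
      have hJb : Integrable (fun ω => xhat (t+1) ω j * (w (t+1) ω i - wbar i)
          + (w (t+1) ω i - wbar i) * (w (t+1) ω j - wbar j)) P := (hhatδ_int j i).add hJc
      have hJa : Integrable (fun ω => xhat (t+1) ω i * (w (t+1) ω j - wbar j)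
          + (xhat (t+1) ω j * (w (t+1) ω i - wbar i)
            + (w (t+1) ω i - wbar i) * (w (t+1) ω j - wbar j))) P := (hhatδ_int i j).add hJb
      rw [e, integral_add (hhat2 i j) hJa, integral_add (hhatδ_int i j) hJb,
        integral_add (hhatδ_int j i) hJc,
        hhatδ0 i j, hhatδ0 j i, hwcov (t+1) ht1 htN i j, hhatS i j]
      ring
    have hlin_int : Integrable (fun ω => xhat (t+1) ω ⬝ᵥ m₃) P := by
      have e : (fun ω => xhat (t+1) ω ⬝ᵥ m₃) = fun ω => ∑ i, xhat (t+1) ω i * m₃ i := rfl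
      rw [e]
      exact integrable_finset_sum _ fun i _ => (hhat1 i).mul_const _
    refine ⟨Integrable.add ((helper_quad_int _ _ hhat2).const_mul 4)
      (hlin_int.const_mul 2), ?_⟩
    -- recursions at step t
    have e1 := hP (t+1) ht1 htN
    simp only [Nat.add_sub_cancel] at e1
    have e2 := hζ (t+1) ht1 htN
    simp only [Nat.add_sub_cancel] at e2
    have e3 := hd (t+1) ht1 htN
    simp only [Nat.add_sub_cancel] at e3
    have ePmG : Pm t - (4:ℝ) • (Q * W * Q) = (A + B * K t)ᵀ * Pm (t+1) * (A + B * K t) := by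
      rw [e1]
      exact add_sub_cancel_right _ _
    have eζ : ζ t - m₃ = (A + B * K t)ᵀ *ᵥ ζ (t+1)
        + (A + B * K t)ᵀ *ᵥ (Pm (t+1) *ᵥ (B *ᵥ l t + wbar)) := by
      rw [e2]
      abel
    rw [integral_add ((helper_quad_int _ _ hhat2).const_mul 4) (hlin_int.const_mul 2),
      integral_const_mul, integral_const_mul, helper_quad _ _ hhat2, helper_lin _ _ hhat1]
    simp only [hhatS, hhatmean]
    simp only [hF]
    rw [e3, ePmG, eζ, hμrec]
    simp only [hSrec]
    rw [sum_sub_smul (Pm (t+1)) (Q * W * Q)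
      (fun i j => (((A + B * K t) * Sf t * (A + B * K t)ᵀ) i j
        + (((A + B * K t) *ᵥ μf t) i * (B *ᵥ l t + wbar) j
          + (B *ᵥ l t + wbar) i * (((A + B * K t) *ᵥ μf t) j)
          + (B *ᵥ l t + wbar) i * (B *ᵥ l t + wbar) j)) + W i j)]
    rw [sum_expand (Pm (t+1)) (A + B * K t) (Sf t) W
      ((A + B * K t) *ᵥ μf t) (B *ᵥ l t + wbar) hWsymm]
    rw [sum_expand (Q * W * Q) (A + B * K t) (Sf t) W
      ((A + B * K t) *ᵥ μf t) (B *ᵥ l t + wbar) hWsymm]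
    rw [sum_expand' (Q * W * Q) (A + B * K t) (Sf t)
      ((A + B * K t) *ᵥ μf t) (B *ᵥ l t + wbar)]
    rw [dot_symm (hPmsymm (t+1) htN) (B *ᵥ l t + wbar) ((A + B * K t) *ᵥ μf t)]
    rw [dot_symm hQWQsymm (B *ᵥ l t + wbar) ((A + B * K t) *ᵥ μf t)]
    simp only [add_dotProduct, sub_dotProduct, dotProduct_add, dot_tA]
    have elin : (∑ i, (((A + B * K t) *ᵥ μf t) i + (B *ᵥ l t + wbar) i) * m₃ i)
        = ((A + B * K t) *ᵥ μf t) ⬝ᵥ m₃ + (B *ᵥ l t + wbar) ⬝ᵥ m₃ := by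
      simp [dotProduct, add_mul, Finset.sum_add_distrib]
    rw [elin, dotProduct_comm ((A + B * K t) *ᵥ μf t) m₃,
      dotProduct_comm (B *ᵥ l t + wbar) m₃]
    have etr : ((Pm (t+1) - (4:ℝ) • (Q * W * Q)) * W).trace
        = (Pm (t+1) * W).trace - 4 * ((Q * W * Q) * W).trace := by
      simp [Matrix.sub_mul, Matrix.smul_mul, Matrix.trace_sub, Matrix.trace_smul, smul_eq_mul]
    rw [etr]
    rw [dotProduct_comm (Pm (t+1) *ᵥ (B *ᵥ l t + wbar)) ((A + B * K t) *ᵥ μf t)]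
    simp only [dotProduct_add]
    ring
  -- assembling
  have hsum_sw : ∀ ω, (∑ t ∈ Finset.Icc 1 N,
      (4 * (xhat t ω ⬝ᵥ ((Q * W * Q) *ᵥ xhat t ω)) + 2 * (xhat t ω ⬝ᵥ m₃)))
      = ∑ s ∈ Finset.range N,
      (4 * (xhat (s+1) ω ⬝ᵥ ((Q * W * Q) *ᵥ xhat (s+1) ω)) + 2 * (xhat (s+1) ω ⬝ᵥ m₃)) := by
    intro ω
    refine Finset.sum_bij' (i := fun t _ => t - 1) (j := fun s _ => s + 1) ?_ ?_ ?_ ?_ ?_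
    · intro a ha; simp only [Finset.mem_Icc] at ha; simp only [Finset.mem_range]; omega
    · intro a ha; simp only [Finset.mem_range] at ha; simp only [Finset.mem_Icc]; omega
    · intro a ha; simp only [Finset.mem_Icc] at ha; show a - 1 + 1 = a; omega
    · intro a ha; show a + 1 - 1 = a; omega
    · intro a ha; simp only [Finset.mem_Icc] at ha; rw [Nat.sub_add_cancel ha.1]
  simp_rw [hsum_sw]
  rw [integral_finset_sum _ fun s hs => (step s (Finset.mem_range.mp hs)).1]
  rw [Finset.sum_congr rfl fun s hs => (step s (Finset.mem_range.mp hs)).2]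
  rw [Finset.sum_range_sub' F N]
  have hFN : F N = 0 := by
    simp [hF, hPN, hζN, hdN, sub_self, Matrix.zero_mul]
  rw [hFN, sub_zero]
  -- compute F 0
  have hμ0 : μf 0 = x₀ := by
    funext i; simp [hμf, hx0]
  have hS0 : ∀ i j, Sf 0 i j = x₀ i * x₀ j := by
    intro i j; simp [hSf, hx0]
  simp only [hF]
  rw [hμ0]
  rw [Finset.sum_congr rfl fun i _ => Finset.sum_congr rfl fun j _ => by rw [hS0 i j]]
  rw [sum_Rab]
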